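/- Let ℓ(x) = uᵀx be homogeneous linear on ℝⁿ with u constant. If x, x' satisfy the Kahan equation for the Suslov field f(x) = ℓ(x)J∇H(x) with H homogeneous quadratic and J constant skew-symmetric, then ∇H(x)ᵀ(x'ℓ(x) + xℓ(x')) = ∇H(x')ᵀ(x'ℓ(x) + xℓ(x')). -/
import Mathlib


open Matrix

/-- If `x, x'` satisfy the Kahan equation for the Suslov vector
field `f(x) = ℓ(x)J∇H(x)` with `ℓ(x) = uᵀx`, `H(x) = (1/2)xᵀAx` (`A` symmetric,
`J` skew-symmetric), then `∇H(x)ᵀ(x'ℓ(x) + xℓ(x')) = ∇H(x')ᵀ(x'ℓ(x) + xℓ(x'))`. -/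
theorem kahan_suslov_key_identity (n : ℕ) (h : ℝ) (hh : h ≠ 0)
    (u : Fin n → ℝ) (A J : Matrix (Fin n) (Fin n) ℝ)
    (hA : A.IsSymm) (hJ : Jᵀ = -J)
    (f : (Fin n → ℝ) → (Fin n → ℝ))
    (hf : ∀ x, f x = (u ⬝ᵥ x) • (J * A).mulVec x)
    (x x' : Fin n → ℝ)
    (hkahan : (1/h) • (x' - x) =
      -((1/2 : ℝ) • f x) + (2 : ℝ) • f ((1/2 : ℝ) • (x + x')) - (1/2 : ℝ) • f x') :
    A.mulVec x ⬝ᵥ ((u ⬝ᵥ x) • x' + (u ⬝ᵥ x') • x) =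
      A.mulVec x' ⬝ᵥ ((u ⬝ᵥ x) • x' + (u ⬝ᵥ x') • x) := by
  set v : Fin n → ℝ := (u ⬝ᵥ x) • x' + (u ⬝ᵥ x') • x with hv
  -- Step 1: x' - x = (h/2) • (J*A).mulVec v
  have key : x' - x = (h/2) • (J * A).mulVec v := by
    funext i
    have := congrFun hkahan i
    simp only [hf, hv, Matrix.mulVec_add, Matrix.mulVec_smul, Matrix.smul_mulVec,
      dotProduct_add, dotProduct_smul, smul_eq_mul, Pi.add_apply, Pi.smul_apply,
      Pi.sub_apply, Pi.neg_apply, smul_add] at this ⊢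
    field_simp at this
    nlinarith [this]
  -- Step 2: skew-symmetry gives (x'-x) ⬝ᵥ A.mulVec v = 0
  have skew : ∀ w : Fin n → ℝ, J.mulVec w ⬝ᵥ w = 0 := by
    intro w
    have h2 : J.mulVec w ⬝ᵥ w = w ⬝ᵥ J.mulVec w := dotProduct_comm _ _
    have h3 : w ⬝ᵥ J.mulVec w = (w ᵥ* J) ⬝ᵥ w := Matrix.dotProduct_mulVec _ _ _
    have h4 : w ᵥ* J = -(J.mulVec w) := by
      rw [← Matrix.mulVec_transpose, hJ, Matrix.neg_mulVec]
    rw [h4, neg_dotProduct] at h3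
    linarith [h2, h3]
  have h0 : (x' - x) ⬝ᵥ A.mulVec v = 0 := by
    rw [key, smul_dotProduct, ← Matrix.mulVec_mulVec, skew (A.mulVec v), smul_zero]
  -- Step 3: conclude
  have hsym : A.mulVec (x' - x) ⬝ᵥ v = (x' - x) ⬝ᵥ A.mulVec v := by
    rw [Matrix.dotProduct_mulVec, ← Matrix.mulVec_transpose, hA.eq]
  rw [h0, Matrix.mulVec_sub, sub_dotProduct] at hsym
  linarith
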